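/- Let w₁, …, w₅ be real numbers and T₁ = w₁·K₅⁺ + w₂·L₃⁺ + w₃·K₁⁺ + w₄·K₃⁻ + w₅·L₃⁻. If the partial transpose of I − T₁ over the single factor B₂ is positive semidefinite, then (3/4)·(w₂ + w₅) ≤ 1. -/

import Mathlib

open Matrix
open scoped Matrix Kronecker ComplexOrder

noncomputable section

/-- Index type of `ℂ² ⊗ ℂ²`. -/
abbrev Q : Type := Fin 2 × Fin 2

/-- The standard basis vector `|ab⟩` of `ℂ² ⊗ ℂ²`. -/
def ket (a b : Fin 2) : Q → ℂ := fun p => if p = (a, b) then 1 else 0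

/-- The Bell basis `φ⁰, φ¹, φ², φ³` of `ℂ² ⊗ ℂ²`. -/
def bell : Fin 4 → Q → ℂ
  | 0 => fun p => (ket 0 0 p + ket 1 1 p) / (Real.sqrt 2 : ℂ)
  | 1 => fun p => Complex.I * (ket 0 1 p + ket 1 0 p) / (Real.sqrt 2 : ℂ)
  | 2 => fun p => (-ket 0 1 p + ket 1 0 p) / (Real.sqrt 2 : ℂ)
  | 3 => fun p => Complex.I * (ket 0 0 p - ket 1 1 p) / (Real.sqrt 2 : ℂ)

/-- The product basis `e^{jk} = φʲ ⊗ φᵏ` of `(ℂ²⊗ℂ²)⊗(ℂ²⊗ℂ²)`. -/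
def e (j k : Fin 4) : Q × Q → ℂ := fun pq => bell j pq.1 * bell k pq.2

/-- Rank-one operator `|v⟩⟨v|`. -/
def outer {m : Type*} (v : m → ℂ) : Matrix m m ℂ := vecMulVec v (star v)

/-- Orthogonal projection onto
`span{e^{jk}+e^{kj} : 1≤j<k≤3} ∪ {e^{11}−e^{22}, e^{22}−e^{33}}`. -/
def K5 : Matrix (Q × Q) (Q × Q) ℂ :=
  (1 / 2 : ℂ) • (outer (e 1 2 + e 2 1) + outer (e 2 3 + e 3 2) + outer (e 3 1 + e 1 3)) +
    (1 / 2 : ℂ) • outer (e 1 1 - e 2 2) +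
    (1 / 6 : ℂ) • outer (e 1 1 + e 2 2 - (2 : ℂ) • e 3 3)

/-- Orthogonal projection onto `span{e^{11}+e^{22}+e^{33}}`. -/
def K1 : Matrix (Q × Q) (Q × Q) ℂ :=
  (1 / 3 : ℂ) • outer (e 1 1 + e 2 2 + e 3 3)

/-- Orthogonal projection onto `span{e^{jk}−e^{kj} : 1≤j<k≤3}`. -/
def K3m : Matrix (Q × Q) (Q × Q) ℂ :=
  (1 / 2 : ℂ) • (outer (e 1 2 - e 2 1) + outer (e 2 3 - e 3 2) + outer (e 3 1 - e 1 3))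

/-- Orthogonal projection onto `span{e^{00}}`. -/
def L1 : Matrix (Q × Q) (Q × Q) ℂ := outer (e 0 0)

/-- Orthogonal projection onto `span{e^{0j}+e^{j0} : j=1,2,3}`. -/
def L3p : Matrix (Q × Q) (Q × Q) ℂ :=
  (1 / 2 : ℂ) • (outer (e 0 1 + e 1 0) + outer (e 0 2 + e 2 0) + outer (e 0 3 + e 3 0))

/-- Orthogonal projection onto `span{e^{0j}−e^{j0} : j=1,2,3}`. -/
def L3m : Matrix (Q × Q) (Q × Q) ℂ :=
  (1 / 2 : ℂ) • (outer (e 0 1 - e 1 0) + outer (e 0 2 - e 2 0) + outer (e 0 3 - e 3 0))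

/-- The matrix elements `x_{jk} = ⟨φʲ, σ φᵏ⟩` of a state `σ` in the Bell basis. -/
def x (σ : Matrix Q Q ℂ) (j k : Fin 4) : ℂ := star (bell j) ⬝ᵥ σ.mulVec (bell k)

-- An element of `Q × Q = (A₁ × B₁) × (A₂ × B₂)` is the quadruple of indices
-- `((a₁,b₁),(a₂,b₂))` of `(ℂ²)^{⊗4} = A₁ ⊗ B₁ ⊗ A₂ ⊗ B₂`;
-- the first sample is `A₁ ⊗ B₁` and the second sample is `A₂ ⊗ B₂`.

/-- Partial transpose over the second sample `A₂ ⊗ B₂`. -/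
def ptSecond (X : Matrix (Q × Q) (Q × Q) ℂ) : Matrix (Q × Q) (Q × Q) ℂ :=
  Matrix.of fun r c => X (r.1, c.2) (c.1, r.2)

/-- Partial transpose over the factors `B₁ ⊗ B₂`. -/
def ptB (X : Matrix (Q × Q) (Q × Q) ℂ) : Matrix (Q × Q) (Q × Q) ℂ :=
  Matrix.of fun r c =>
    X ((r.1.1, c.1.2), (r.2.1, c.2.2)) ((c.1.1, r.1.2), (c.2.1, r.2.2))

/-- Partial transpose over the single factor `B₂`. -/
def ptB2 (X : Matrix (Q × Q) (Q × Q) ℂ) : Matrix (Q × Q) (Q × Q) ℂ :=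
  Matrix.of fun r c => X (r.1, (r.2.1, c.2.2)) (c.1, (c.2.1, r.2.2))


set_option maxHeartbeats 4000000 in
/-- The witness vector `(|00⟩+|11⟩) ⊗ (|01⟩−|10⟩)`. -/
def wv : Q × Q → ℂ := fun p =>
  (ket 0 0 p.1 + ket 1 1 p.1) * (ket 0 1 p.2 - ket 1 0 p.2)

set_option maxHeartbeats 4000000 in
lemma wv_collapse (M : Matrix (Q × Q) (Q × Q) ℂ) :
    star wv ⬝ᵥ M.mulVec wv =
      (M ((0,0),(0,1)) ((0,0),(0,1)) - M ((0,0),(0,1)) ((0,0),(1,0)) + M ((0,0),(0,1)) ((1,1),(0,1)) - M ((0,0),(0,1)) ((1,1),(1,0)))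
      - (M ((0,0),(1,0)) ((0,0),(0,1)) - M ((0,0),(1,0)) ((0,0),(1,0)) + M ((0,0),(1,0)) ((1,1),(0,1)) - M ((0,0),(1,0)) ((1,1),(1,0)))
      + (M ((1,1),(0,1)) ((0,0),(0,1)) - M ((1,1),(0,1)) ((0,0),(1,0)) + M ((1,1),(0,1)) ((1,1),(0,1)) - M ((1,1),(0,1)) ((1,1),(1,0)))
      - (M ((1,1),(1,0)) ((0,0),(0,1)) - M ((1,1),(1,0)) ((0,0),(1,0)) + M ((1,1),(1,0)) ((1,1),(0,1)) - M ((1,1),(1,0)) ((1,1),(1,0))) := by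
  simp only [dotProduct, mulVec, Fintype.sum_prod_type, Fin.sum_univ_two,
    Pi.star_apply, wv, ket]
  norm_num [Prod.ext_iff, Fin.ext_iff]
  ring

set_option maxHeartbeats 16000000 in
/-- If the partial transpose over the single factor `B₂` of `I − T₁`, where
`T₁ = w₁K₅⁺ + w₂L₃⁺ + w₃K₁⁺ + w₄K₃⁻ + w₅L₃⁻`, is positive semidefinite, then
`(3/4)(w₂ + w₅) ≤ 1`. -/
theorem stmt19 (w1 w2 w3 w4 w5 : ℝ)
    (T1 : Matrix (Q × Q) (Q × Q) ℂ)
    (hT1 : T1 = (w1 : ℂ) • K5 + (w2 : ℂ) • L3p + (w3 : ℂ) • K1 +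
      (w4 : ℂ) • K3m + (w5 : ℂ) • L3m)
    (hpt : (ptB2 (1 - T1)).PosSemidef) :
    (3 / 4 : ℝ) * (w2 + w5) ≤ 1 := by
  have hi2 : ((Real.sqrt 2:ℝ):ℂ)⁻¹ ^ 2 = 2⁻¹ := by
    rw [inv_pow]; norm_cast; rw [Real.sq_sqrt] <;> norm_num
  have hi4 : ((Real.sqrt 2:ℝ):ℂ)⁻¹ ^ 4 = 4⁻¹ := by
    rw [show ((Real.sqrt 2:ℝ):ℂ)⁻¹ ^ 4 = (((Real.sqrt 2:ℝ):ℂ)⁻¹ ^ 2)^2 by ring, hi2]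
    norm_num
  have h := hpt.dotProduct_mulVec_nonneg wv
  rw [wv_collapse] at h
  have key :
      ((ptB2 (1 - T1)) ((0,0),(0,1)) ((0,0),(0,1)) - (ptB2 (1 - T1)) ((0,0),(0,1)) ((0,0),(1,0)) + (ptB2 (1 - T1)) ((0,0),(0,1)) ((1,1),(0,1)) - (ptB2 (1 - T1)) ((0,0),(0,1)) ((1,1),(1,0)))
      - ((ptB2 (1 - T1)) ((0,0),(1,0)) ((0,0),(0,1)) - (ptB2 (1 - T1)) ((0,0),(1,0)) ((0,0),(1,0)) + (ptB2 (1 - T1)) ((0,0),(1,0)) ((1,1),(0,1)) - (ptB2 (1 - T1)) ((0,0),(1,0)) ((1,1),(1,0)))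
      + ((ptB2 (1 - T1)) ((1,1),(0,1)) ((0,0),(0,1)) - (ptB2 (1 - T1)) ((1,1),(0,1)) ((0,0),(1,0)) + (ptB2 (1 - T1)) ((1,1),(0,1)) ((1,1),(0,1)) - (ptB2 (1 - T1)) ((1,1),(0,1)) ((1,1),(1,0)))
      - ((ptB2 (1 - T1)) ((1,1),(1,0)) ((0,0),(0,1)) - (ptB2 (1 - T1)) ((1,1),(1,0)) ((0,0),(1,0)) + (ptB2 (1 - T1)) ((1,1),(1,0)) ((1,1),(0,1)) - (ptB2 (1 - T1)) ((1,1),(1,0)) ((1,1),(1,0)))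
      = ((4 - 3*w2 - 3*w5 : ℝ) : ℂ) := by
    subst hT1
    simp only [ptB2, Matrix.of_apply, Matrix.sub_apply, Matrix.one_apply,
      Matrix.add_apply, Matrix.smul_apply, K5, L3p, K1, K3m, L3m, outer,
      vecMulVec_apply, Pi.add_apply, Pi.sub_apply, Pi.smul_apply, Pi.star_apply,
      e, bell, ket, smul_eq_mul]
    norm_num [Prod.ext_iff, Fin.ext_iff, div_eq_mul_inv]
    ring_nf
    simp only [hi2, hi4, Complex.I_sq, Complex.I_pow_four]
    ring_nf
  rw [key] at h
  have h2 : (0:ℝ) ≤ 4 - 3*w2 - 3*w5 := Complex.zero_le_real.mp h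
  linarith
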